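/- arXiv:2505.11524 — 5 statements merged into one kernel-verified Lean document; each statement's English description precedes it below -/
import Mathlib

section
/- Suppose the system is controllable (rank C_n = n) and observable (rank O_n = n). Then for all integers N ≥ n and H ≥ n, the block Hankel matrix of Markov parameters H ∈ ℝ^{pN×mH}, whose (i,j)-th p×m block equals C A^{i+j−2} B, has rank exactly n. -/
open Matrix

section aux

lemma rank_submatrix_rows_le {l m nn : Type*} [Fintype m] [Fintype nn] [Fintype l]
    (A : Matrix m nn ℝ) (f : l → m) :
    (A.submatrix f id).rank ≤ A.rank := by
  have h : (A.submatrix f id).mulVecLin = (LinearMap.funLeft ℝ ℝ f).comp A.mulVecLin := by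
    ext v i
    simp [Matrix.mulVec, Matrix.submatrix, dotProduct]
  rw [Matrix.rank, Matrix.rank, h, LinearMap.range_comp]
  exact Submodule.finrank_map_le _ _

lemma rank_submatrix_cols_le {l m nn : Type*} [Fintype m] [Fintype nn] [Fintype l]
    (A : Matrix m nn ℝ) (g : l → nn) :
    (A.submatrix id g).rank ≤ A.rank := by
  rw [← Matrix.rank_transpose (A.submatrix id g), Matrix.transpose_submatrix,
    ← Matrix.rank_transpose A]
  exact rank_submatrix_rows_le Aᵀ g

/-- If `O` has full column rank and `M` is any matrix, then `rank (O * M) = rank M`. -/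
lemma rank_mul_eq_of_full_col_rank {q : Type*} [Fintype q] {n : ℕ}
    (O : Matrix q (Fin n) ℝ) (hO : O.rank = n)
    {r : Type*} [Fintype r] (M : Matrix (Fin n) r ℝ) :
    (O * M).rank = M.rank := by
  have hinj : Function.Injective O.mulVecLin := by
    rw [← LinearMap.ker_eq_bot]
    have h1 := LinearMap.finrank_range_add_finrank_ker O.mulVecLin
    rw [show (Module.finrank ℝ (LinearMap.range O.mulVecLin)) = n from hO] at h1
    simp only [Module.finrank_pi, Fintype.card_fin] at h1
    have : Module.finrank ℝ (LinearMap.ker O.mulVecLin) = 0 := by omega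
    exact Submodule.finrank_eq_zero.mp this
  rw [Matrix.rank, Matrix.rank, Matrix.mulVecLin_mul, LinearMap.range_comp]
  exact (LinearEquiv.finrank_eq
    (Submodule.equivMapOfInjective O.mulVecLin hinj (LinearMap.range M.mulVecLin))).symm

end aux

/-- If the LTI system `(A, B, C)` is controllable (`rank C_n = n`) and observable
(`rank O_n = n`), then for all `N ≥ n` and `H ≥ n` the block Hankel matrix of Markov
parameters, whose `(i,j)`-th `p × m` block (0-based `i,j`) is `C A^(i+j) B`, has rank
exactly `n`. -/
theorem hankel_markov_rank_eq_order
    {n m p : ℕ} (N H : ℕ) (hN : n ≤ N) (hH : n ≤ H)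
    (A : Matrix (Fin n) (Fin n) ℝ) (B : Matrix (Fin n) (Fin m) ℝ)
    (C : Matrix (Fin p) (Fin n) ℝ)
    (ctrb : Matrix (Fin n) (Fin n × Fin m) ℝ)
    (hctrb : ∀ c : Fin n, ∀ i : Fin n, ∀ b : Fin m,
      ctrb c (i, b) = (A ^ (i : ℕ) * B) c b)
    (obsv : Matrix (Fin n × Fin p) (Fin n) ℝ)
    (hobsv : ∀ i : Fin n, ∀ a : Fin p, ∀ c : Fin n,
      obsv (i, a) c = (C * A ^ (i : ℕ)) a c)
    (hcontrollable : ctrb.rank = n)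
    (hobservable : obsv.rank = n)
    (Hankel : Matrix (Fin N × Fin p) (Fin H × Fin m) ℝ)
    (hHankel : ∀ i : Fin N, ∀ a : Fin p, ∀ j : Fin H, ∀ b : Fin m,
      Hankel (i, a) (j, b) = (C * A ^ ((i : ℕ) + (j : ℕ)) * B) a b) :
    Hankel.rank = n := by
  -- Extended observability and controllability matrices
  set ON : Matrix (Fin N × Fin p) (Fin n) ℝ :=
    fun ia c => (C * A ^ ((ia.1 : ℕ))) ia.2 c with hON
  set CH : Matrix (Fin n) (Fin H × Fin m) ℝ :=
    fun c jb => (A ^ ((jb.1 : ℕ)) * B) c jb.2 with hCH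
  -- Factorization Hankel = ON * CH
  have hfac : Hankel = ON * CH := by
    ext ⟨i, a⟩ ⟨j, b⟩
    have key : C * A ^ ((i : ℕ) + (j : ℕ)) * B = (C * A ^ (i : ℕ)) * (A ^ (j : ℕ) * B) := by
      rw [pow_add, Matrix.mul_assoc, Matrix.mul_assoc, Matrix.mul_assoc]
    have : (ON * CH) (i, a) (j, b) = ((C * A ^ (i : ℕ)) * (A ^ (j : ℕ) * B)) a b := by
      rw [Matrix.mul_apply]
      simp only [Matrix.mul_apply, hON, hCH]
    rw [hHankel, this, key]
  -- ON has full column rank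
  have hONrank : ON.rank = n := by
    apply le_antisymm (ON.rank_le_card_width.trans (by simp))
    have hsub : obsv = ON.submatrix (fun ia : Fin n × Fin p => (Fin.castLE hN ia.1, ia.2)) id := by
      ext ⟨i, a⟩ c
      rw [hobsv]
      rfl
    calc n = obsv.rank := hobservable.symm
    _ = (ON.submatrix (fun ia : Fin n × Fin p => (Fin.castLE hN ia.1, ia.2)) id).rank := by
        rw [hsub]
    _ ≤ ON.rank := rank_submatrix_rows_le _ _
  -- CH has full row rank, i.e. rank n
  have hCHrank : CH.rank = n := by
    apply le_antisymm (CH.rank_le_card_height.trans (by simp))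
    have hsub : ctrb = CH.submatrix id (fun jb : Fin n × Fin m => (Fin.castLE hH jb.1, jb.2)) := by
      ext c ⟨j, b⟩
      rw [hctrb]
      rfl
    calc n = ctrb.rank := hcontrollable.symm
    _ ≤ CH.rank := by rw [hsub]; exact rank_submatrix_cols_le _ _
  rw [hfac, rank_mul_eq_of_full_col_rank ON hONrank CH, hCHrank]
end

section
/- Let A_Y ∈ ℝ^{pN×n}, B_Y ∈ ℝ^{pN×mN}, C_u ∈ ℝ^{n×mN}, L ∈ ℝ^{n×pN}, A ∈ ℝ^{n×n} and suppose A^N = −L A_Y. Let matrices X_p, X_f ∈ ℝ^{n×H}, U_p, U_f ∈ ℝ^{mN×H}, Y_p, Y_f ∈ ℝ^{pN×H} satisfy Y_p = A_Y X_p + B_Y U_p, Y_f = A_Y X_f + B_Y U_f, and X_f = A^N X_p + C_u U_p. Then Y_f = P_1 U_p + P_2 Y_p + B_Y U_f, where P_1 = A_Y (L B_Y + C_u) and P_2 = −A_Y L. -/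
open Matrix

/-- Central algebraic identity of subspace predictive control: if `A^N = −L A_Y`,
`Y_p = A_Y X_p + B_Y U_p`, `Y_f = A_Y X_f + B_Y U_f` and `X_f = A^N X_p + C_u U_p`,
then `Y_f = P_1 U_p + P_2 Y_p + B_Y U_f` with `P_1 = A_Y (L B_Y + C_u)` and
`P_2 = −A_Y L`. -/
theorem spc_identity
    {n m p N H : ℕ}
    (A : Matrix (Fin n) (Fin n) ℝ)
    (AY : Matrix (Fin (p * N)) (Fin n) ℝ)
    (BY : Matrix (Fin (p * N)) (Fin (m * N)) ℝ)
    (Cu : Matrix (Fin n) (Fin (m * N)) ℝ)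
    (L : Matrix (Fin n) (Fin (p * N)) ℝ)
    (hL : A ^ N = -(L * AY))
    (Xp Xf : Matrix (Fin n) (Fin H) ℝ)
    (Up Uf : Matrix (Fin (m * N)) (Fin H) ℝ)
    (Yp Yf : Matrix (Fin (p * N)) (Fin H) ℝ)
    (hYp : Yp = AY * Xp + BY * Up)
    (hYf : Yf = AY * Xf + BY * Uf)
    (hXf : Xf = A ^ N * Xp + Cu * Up) :
    Yf = (AY * (L * BY + Cu)) * Up + (-(AY * L)) * Yp + BY * Uf := by
  subst hYp hYf hXf
  rw [hL]
  simp only [Matrix.mul_add, Matrix.add_mul, Matrix.neg_mul, Matrix.mul_neg, Matrix.mul_assoc]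
  abel
end

section
/- Suppose the extended observability matrix O_N has full column rank n. Then there exist fixed matrices P_1 ∈ ℝ^{pN×mN} and P_2 ∈ ℝ^{pN×pN}, depending only on (A, B, C, N), such that for every trajectory (u_k, x_k, y_k) of the system and every time k ≥ N, the stacked future outputs Y_future = [y_{k+1}; …; y_{k+N}] satisfy Y_future = P_1 U_past + P_2 Y_past + B_Y U_future, where U_past = [u_{k−N}; …; u_{k−1}], Y_past = [y_{k−N+1}; …; y_k], and U_future = [u_k; …; u_{k+N−1}]. That is, the future outputs over a horizon of length N are a fixed linear function of the past N inputs, the past N outputs, and the future N inputs. -/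
open Matrix

private lemma myIsUnit_of_rank_eq {n : ℕ} (M : Matrix (Fin n) (Fin n) ℝ) (h : M.rank = n) :
    IsUnit M := by
  rw [← Matrix.mulVec_surjective_iff_isUnit]
  have hr : LinearMap.range M.mulVecLin = ⊤ := by
    apply Submodule.eq_top_of_finrank_eq
    rw [← Matrix.rank, h]
    simp
  have := LinearMap.range_eq_top.mp hr
  intro v
  obtain ⟨w, hw⟩ := this v
  exact ⟨w, by simpa using hw⟩

private lemma mySum_shift {i N : ℕ} (hi : i < N) (g : ℕ → ℝ) :
    (∑ j ∈ Finset.range N, if 1 ≤ j ∧ j ≤ i then g j else 0)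
      = ∑ j ∈ Finset.range i, g (j + 1) := by
  rw [← Finset.sum_filter]
  have hset : (Finset.range N).filter (fun j => 1 ≤ j ∧ j ≤ i)
      = (Finset.range i).image (· + 1) := by
    ext j
    simp only [Finset.mem_filter, Finset.mem_range, Finset.mem_image]
    constructor
    · rintro ⟨_, h1, h2⟩; exact ⟨j - 1, by omega, by omega⟩
    · rintro ⟨j', hj', rfl⟩; omega
  rw [hset, Finset.sum_image (fun a _ b _ hab => by omega)]

private lemma mySum_trunc {i N : ℕ} (hi : i < N) (g : ℕ → ℝ) :
    (∑ j ∈ Finset.range N, if j ≤ i then g j else 0)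
      = ∑ j ∈ Finset.range (i + 1), g j := by
  rw [← Finset.sum_filter]
  congr 1
  ext j
  simp only [Finset.mem_filter, Finset.mem_range]
  omega

private lemma myMulVec_sum {n m : Type*} [Fintype m] (A : Matrix n m ℝ) {ι : Type*}
    (s : Finset ι) (f : ι → m → ℝ) :
    A.mulVec (∑ j ∈ s, f j) = ∑ j ∈ s, A.mulVec (f j) := by
  classical
  induction s using Finset.induction with
  | empty => simp
  | insert _ _ h ih => rw [Finset.sum_insert h, Finset.sum_insert h, Matrix.mulVec_add, ih]

/-- If the extended observability matrix `O_N` has full column rank `n`, then there exist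
fixed matrices `P_1 ∈ ℝ^{pN×mN}` and `P_2 ∈ ℝ^{pN×pN}` (depending only on `(A,B,C,N)`)
such that for every trajectory of the system and every `k ≥ N`, the stacked future
outputs `[y_{k+1}; …; y_{k+N}]` equal `P_1 U_past + P_2 Y_past + B_Y U_future`, where
`U_past = [u_{k−N}; …; u_{k−1}]`, `Y_past = [y_{k−N+1}; …; y_k]`, and
`U_future = [u_k; …; u_{k+N−1}]`. -/
theorem spc_future_output_prediction
    {n m p : ℕ} (N : ℕ)
    (A : Matrix (Fin n) (Fin n) ℝ) (B : Matrix (Fin n) (Fin m) ℝ)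
    (C : Matrix (Fin p) (Fin n) ℝ)
    (ObsN : Matrix (Fin N × Fin p) (Fin n) ℝ)
    (hObsN : ∀ i : Fin N, ∀ a : Fin p, ∀ c : Fin n,
      ObsN (i, a) c = (C * A ^ (i : ℕ)) a c)
    (hrank : ObsN.rank = n)
    (BY : Matrix (Fin N × Fin p) (Fin N × Fin m) ℝ)
    (hBY : ∀ i : Fin N, ∀ a : Fin p, ∀ j : Fin N, ∀ b : Fin m,
      BY (i, a) (j, b) = if (j : ℕ) ≤ (i : ℕ) then (C * A ^ ((i : ℕ) - (j : ℕ)) * B) a b else 0) :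
    ∃ P1 : Matrix (Fin N × Fin p) (Fin N × Fin m) ℝ,
    ∃ P2 : Matrix (Fin N × Fin p) (Fin N × Fin p) ℝ,
      ∀ (u : ℕ → Fin m → ℝ) (x : ℕ → Fin n → ℝ) (y : ℕ → Fin p → ℝ),
        (∀ k, x (k + 1) = A.mulVec (x k) + B.mulVec (u k)) →
        (∀ k, y k = C.mulVec (x k)) →
        ∀ k : ℕ, N ≤ k →
          (fun ia : Fin N × Fin p => y (k + 1 + (ia.1 : ℕ)) ia.2) =
            P1.mulVec (fun jb : Fin N × Fin m => u (k - N + (jb.1 : ℕ)) jb.2) +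
            P2.mulVec (fun ia : Fin N × Fin p => y (k - N + 1 + (ia.1 : ℕ)) ia.2) +
            BY.mulVec (fun jb : Fin N × Fin m => u (k + (jb.1 : ℕ)) jb.2) := by
  classical
  rcases Nat.eq_zero_or_pos N with hN0 | hN0
  · subst hN0
    exact ⟨0, 0, fun u x y hx hy k hk => funext fun ia => absurd ia.1.2 (by omega)⟩
  -- pseudo-inverse of ObsN
  have hunit : IsUnit (ObsNᵀ * ObsN) := by
    apply myIsUnit_of_rank_eq
    rw [Matrix.rank_transpose_mul_self, hrank]
  set pinv : Matrix (Fin n) (Fin N × Fin p) ℝ := (ObsNᵀ * ObsN)⁻¹ * ObsNᵀ with hpinv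
  have hpO : pinv * ObsN = 1 := by
    rw [hpinv, Matrix.mul_assoc]
    exact Matrix.nonsing_inv_mul _ ((Matrix.isUnit_iff_isUnit_det _).mp hunit)
  -- auxiliary matrices
  set AY : Matrix (Fin N × Fin p) (Fin n) ℝ :=
    fun ia c => (C * A ^ ((ia.1 : ℕ) + 1)) ia.2 c with hAY
  set G : Matrix (Fin N × Fin p) (Fin N × Fin m) ℝ :=
    fun ia jb => if 1 ≤ (jb.1 : ℕ) ∧ (jb.1 : ℕ) ≤ (ia.1 : ℕ)
      then (C * A ^ ((ia.1 : ℕ) - (jb.1 : ℕ)) * B) ia.2 jb.2 else 0 with hG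
  set R' : Matrix (Fin n) (Fin N × Fin m) ℝ :=
    fun c jb => if 1 ≤ (jb.1 : ℕ) ∧ (jb.1 : ℕ) ≤ N - 1
      then (A ^ (N - 1 - (jb.1 : ℕ)) * B) c jb.2 else 0 with hR
  refine ⟨AY * R' - AY * A ^ (N - 1) * pinv * G, AY * A ^ (N - 1) * pinv, ?_⟩
  intro u x y hx hy k hk
  -- state evolution
  have hS : ∀ t i : ℕ, x (t + i) =
      (A ^ i).mulVec (x t)
        + ∑ j ∈ Finset.range i, (A ^ (i - 1 - j) * B).mulVec (u (t + j)) := by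
    intro t i
    induction i with
    | zero => simp
    | succ i ih =>
      have ht : t + (i + 1) = (t + i) + 1 := by ring
      rw [ht, hx, ih, Matrix.mulVec_add, Matrix.mulVec_mulVec, myMulVec_sum,
        Finset.sum_range_succ]
      have h1 : A * A ^ i = A ^ (i + 1) := (pow_succ' A i).symm
      have h2 : ∀ j ∈ Finset.range i,
          A.mulVec ((A ^ (i - 1 - j) * B).mulVec (u (t + j)))
            = (A ^ (i + 1 - 1 - j) * B).mulVec (u (t + j)) := by
        intro j hj
        rw [Finset.mem_range] at hj
        rw [Matrix.mulVec_mulVec, ← Matrix.mul_assoc]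
        have : A * A ^ (i - 1 - j) = A ^ (i + 1 - 1 - j) := by
          rw [← pow_succ']
          congr 1
          omega
        rw [this]
      rw [Finset.sum_congr rfl h2, h1]
      have h3 : (A ^ (i + 1 - 1 - i) * B) = B := by
        have : i + 1 - 1 - i = 0 := by omega
        rw [this, pow_zero, Matrix.one_mul]
      rw [h3]
      abel
  -- output formula
  have hYf : ∀ t i : ℕ, y (t + i) =
      (C * A ^ i).mulVec (x t)
        + ∑ j ∈ Finset.range i, (C * A ^ (i - 1 - j) * B).mulVec (u (t + j)) := by
    intro t i
    rw [hy, hS t i, Matrix.mulVec_add, Matrix.mulVec_mulVec, myMulVec_sum]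
    congr 1
    refine Finset.sum_congr rfl fun j hj => ?_
    rw [Matrix.mulVec_mulVec, Matrix.mul_assoc]
  -- abbreviations
  set Up : Fin N × Fin m → ℝ := fun jb => u (k - N + (jb.1 : ℕ)) jb.2 with hUp
  set Yp : Fin N × Fin p → ℝ := fun ia => y (k - N + 1 + (ia.1 : ℕ)) ia.2 with hYp
  set Uf : Fin N × Fin m → ℝ := fun jb => u (k + (jb.1 : ℕ)) jb.2 with hUf
  -- E1 : Yp = ObsN x₁ + G Up
  have hE1 : Yp = ObsN.mulVec (x (k - N + 1)) + G.mulVec Up := by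
    funext ia
    obtain ⟨i, a⟩ := ia
    have h1 : (ObsN.mulVec (x (k - N + 1))) (i, a)
        = ((C * A ^ (i : ℕ)).mulVec (x (k - N + 1))) a := by
      simp only [Matrix.mulVec, dotProduct]
      exact Finset.sum_congr rfl fun c _ => by rw [hObsN i a c]
    have h2 : (G.mulVec Up) (i, a)
        = ∑ j ∈ Finset.range (i : ℕ),
            ((C * A ^ ((i : ℕ) - 1 - j) * B).mulVec (u (k - N + 1 + j))) a := by
      simp only [Matrix.mulVec, dotProduct, Fintype.sum_prod_type, hG]
      have hterm : ∀ j : Fin N,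
          (∑ b : Fin m, (if 1 ≤ (j : ℕ) ∧ (j : ℕ) ≤ (i : ℕ)
            then (C * A ^ ((i : ℕ) - (j : ℕ)) * B) a b else 0) * Up (j, b))
          = if 1 ≤ (j : ℕ) ∧ (j : ℕ) ≤ (i : ℕ)
            then ∑ b : Fin m, (C * A ^ ((i : ℕ) - (j : ℕ)) * B) a b * u (k - N + (j : ℕ)) b
            else 0 := by
        intro j
        by_cases hcond : 1 ≤ (j : ℕ) ∧ (j : ℕ) ≤ (i : ℕ)
        · simp only [if_pos hcond, hUp]
        · simp only [if_neg hcond, zero_mul, Finset.sum_const_zero]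
      rw [Fintype.sum_congr _ _ hterm]
      rw [Fin.sum_univ_eq_sum_range (fun j => if 1 ≤ j ∧ j ≤ (i : ℕ)
          then ∑ b : Fin m, (C * A ^ ((i : ℕ) - j) * B) a b * u (k - N + j) b else 0) N]
      rw [mySum_shift i.2]
      refine Finset.sum_congr rfl fun j hj => ?_
      have e1 : (i : ℕ) - (j + 1) = (i : ℕ) - 1 - j := by omega
      have e2 : k - N + (j + 1) = k - N + 1 + j := by omega
      rw [e1, e2]
    simp only [hYp]
    show y (k - N + 1 + (i : ℕ)) a = _
    simp only [Pi.add_apply]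
    rw [h1, h2, congrFun (hYf (k - N + 1) (i : ℕ)) a]
    simp only [Pi.add_apply, Finset.sum_apply]
  -- E2 : x k = A^(N-1) x₁ + R' Up
  have hE2 : x k = (A ^ (N - 1)).mulVec (x (k - N + 1)) + R'.mulVec Up := by
    have hkk : k = (k - N + 1) + (N - 1) := by omega
    conv_lhs => rw [hkk]
    rw [hS (k - N + 1) (N - 1)]
    congr 1
    funext c
    simp only [Matrix.mulVec, dotProduct, Fintype.sum_prod_type, hR, Finset.sum_apply]
    have : ∀ j : Fin N,
        (∑ b : Fin m, (if 1 ≤ (j : ℕ) ∧ (j : ℕ) ≤ N - 1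
          then (A ^ (N - 1 - (j : ℕ)) * B) c b else 0) * Up (j, b))
        = if 1 ≤ (j : ℕ) ∧ (j : ℕ) ≤ N - 1
          then ((A ^ (N - 1 - (j : ℕ)) * B).mulVec (u (k - N + (j : ℕ)))) c
          else 0 := by
      intro j
      by_cases hcond : 1 ≤ (j : ℕ) ∧ (j : ℕ) ≤ N - 1
      · simp only [if_pos hcond, Matrix.mulVec, dotProduct, hUp]
      · simp only [if_neg hcond, zero_mul, Finset.sum_const_zero]
    rw [Fintype.sum_congr _ _ this]
    have hconv : (∑ j : Fin N, if 1 ≤ (j : ℕ) ∧ (j : ℕ) ≤ N - 1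
        then ((A ^ (N - 1 - (j : ℕ)) * B).mulVec (u (k - N + (j : ℕ)))) c else 0)
        = ∑ j ∈ Finset.range N, (if 1 ≤ j ∧ j ≤ N - 1
          then ((A ^ (N - 1 - j) * B).mulVec (u (k - N + j))) c else 0) :=
      Fin.sum_univ_eq_sum_range (fun j => if 1 ≤ j ∧ j ≤ N - 1
          then ((A ^ (N - 1 - j) * B).mulVec (u (k - N + j))) c else 0) N
    rw [hconv, mySum_shift (by omega : N - 1 < N)]
    refine Finset.sum_congr rfl fun j hj => ?_
    have e1 : N - 1 - 1 - j = N - 1 - (j + 1) := by omega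
    have e2 : k - N + 1 + j = k - N + (j + 1) := by omega
    rw [e1, e2]
    rfl
  -- E3 : Yfuture = AY (x k) + BY Uf
  have hE3 : (fun ia : Fin N × Fin p => y (k + 1 + (ia.1 : ℕ)) ia.2)
      = AY.mulVec (x k) + BY.mulVec Uf := by
    funext ia
    obtain ⟨i, a⟩ := ia
    have h1 : (AY.mulVec (x k)) (i, a) = ((C * A ^ ((i : ℕ) + 1)).mulVec (x k)) a := by
      simp only [Matrix.mulVec, dotProduct, hAY]
    have h2 : (BY.mulVec Uf) (i, a)
        = ∑ j ∈ Finset.range ((i : ℕ) + 1),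
            ((C * A ^ ((i : ℕ) - j) * B).mulVec (u (k + j))) a := by
      simp only [Matrix.mulVec, dotProduct, Fintype.sum_prod_type]
      have hterm : ∀ j : Fin N,
          (∑ b : Fin m, BY (i, a) (j, b) * Uf (j, b))
          = if (j : ℕ) ≤ (i : ℕ)
            then ∑ b : Fin m, (C * A ^ ((i : ℕ) - (j : ℕ)) * B) a b * u (k + (j : ℕ)) b
            else 0 := by
        intro j
        simp only [hBY]
        by_cases hcond : (j : ℕ) ≤ (i : ℕ)
        · simp only [if_pos hcond, hUf]
        · simp only [if_neg hcond, zero_mul, Finset.sum_const_zero]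
      rw [Fintype.sum_congr _ _ hterm]
      rw [Fin.sum_univ_eq_sum_range (fun j => if j ≤ (i : ℕ)
          then ∑ b : Fin m, (C * A ^ ((i : ℕ) - j) * B) a b * u (k + j) b else 0) N]
      rw [mySum_trunc i.2]
    show y (k + 1 + (i : ℕ)) a = _
    simp only [Pi.add_apply]
    have hk1 : k + 1 + (i : ℕ) = k + ((i : ℕ) + 1) := by ring
    rw [hk1, congrFun (hYf k ((i : ℕ) + 1)) a, h1, h2]
    simp only [Pi.add_apply, Finset.sum_apply]
    congr 1
  -- recover x₁ from past data
  have hx1 : x (k - N + 1) = pinv.mulVec (Yp - G.mulVec Up) := by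
    have h1 : ObsN.mulVec (x (k - N + 1)) = Yp - G.mulVec Up := by
      rw [hE1]; abel
    calc x (k - N + 1) = (1 : Matrix (Fin n) (Fin n) ℝ).mulVec (x (k - N + 1)) :=
          (Matrix.one_mulVec _).symm
      _ = (pinv * ObsN).mulVec (x (k - N + 1)) := by rw [hpO]
      _ = pinv.mulVec (ObsN.mulVec (x (k - N + 1))) := (Matrix.mulVec_mulVec _ _ _).symm
      _ = pinv.mulVec (Yp - G.mulVec Up) := by rw [h1]
  -- assemble
  rw [hE3, hE2, hx1]
  rw [Matrix.mulVec_add, Matrix.mulVec_mulVec, Matrix.mulVec_mulVec, Matrix.mulVec_sub,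
    Matrix.mulVec_mulVec, Matrix.sub_mulVec]
  simp only [Matrix.mulVec_mulVec, ← Matrix.mul_assoc]
  abel
end

section
/- (Fundamental lemma.) Suppose the system is controllable (rank C_n = n) and observable (rank O_n = n). Let (u_k, x_k, y_k), k = 0, …, 2N+H−2 (with y defined up to index 2N+H−1), be a trajectory of the system, and suppose the input sequence u_0, …, u_{2N+H−2} is persistently exciting of order 2N+n, i.e., the block Hankel matrix H_{(2N+n, H', u_0)} with H' = (2N+H−1) − (2N+n) + 1 columns has full row rank m(2N+n). Define U_p = H_{(N,H,u_0)}, Y_p = H_{(N,H,y_1)}, U_f = H_{(N,H,u_N)}, Y_f = H_{(N,H,y_{N+1})}. Then for every trajectory (ū_k, x̄_k, ȳ_k), k = 0, …, 2N−1 (with ȳ defined up to index 2N), of the same system, there exists v ∈ ℝ^H such that U_p v = [ū_0; …; ū_{N−1}], Y_p v = [ȳ_1; …; ȳ_N], U_f v = [ū_N; …; ū_{2N−1}], and Y_f v = [ȳ_{N+1}; …; ȳ_{2N}]. -/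
open Matrix

/-- If a matrix has rank equal to its number of rows, its left kernel is trivial. -/
lemma fl_leftker_of_rank {α β : Type*} [Fintype α] [Fintype β] [DecidableEq α] [DecidableEq β]
    (M : Matrix α β ℝ) (h : M.rank = Fintype.card α) :
    ∀ w : α → ℝ, w ᵥ* M = 0 → w = 0 := by
  intro w hw
  have hT : Mᵀ.mulVec w = 0 := by rw [Matrix.mulVec_transpose]; exact hw
  have hker : LinearMap.ker (Matrix.mulVecLin Mᵀ) = ⊥ := by
    have h1 := LinearMap.finrank_range_add_finrank_ker (Matrix.mulVecLin Mᵀ)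
    have h2 : Mᵀ.rank = Fintype.card α := by rw [Matrix.rank_transpose]; exact h
    rw [Matrix.rank] at h2
    rw [h2, Module.finrank_fintype_fun_eq_card] at h1
    have : Module.finrank ℝ (LinearMap.ker (Matrix.mulVecLin Mᵀ)) = 0 := by omega
    exact Submodule.finrank_eq_zero.mp this
  have : w ∈ LinearMap.ker (Matrix.mulVecLin Mᵀ) := by
    simpa [Matrix.mulVecLin, Matrix.mulVec_transpose] using hT
  rw [hker] at this
  simpa using this

/-- If the left kernel of a matrix is trivial, then `mulVec` is surjective. -/
lemma fl_surj_of_leftker {α β : Type*} [Fintype α] [Fintype β] [DecidableEq α] [DecidableEq β]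
    (M : Matrix α β ℝ) (h : ∀ w : α → ℝ, w ᵥ* M = 0 → w = 0) :
    Function.Surjective M.mulVec := by
  have hinj : Function.Injective (Matrix.mulVecLin Mᵀ) := by
    rw [← LinearMap.ker_eq_bot, Submodule.eq_bot_iff]
    intro w hw
    apply h
    rw [← Matrix.mulVec_transpose]
    simpa [Matrix.mulVecLin, Matrix.mulVec_transpose] using hw
  have hrT : Mᵀ.rank = Fintype.card α := by
    rw [Matrix.rank, LinearMap.finrank_range_of_inj hinj, Module.finrank_fintype_fun_eq_card]
  have hr : M.rank = Fintype.card α := by rw [← Matrix.rank_transpose]; exact hrT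
  have htop : LinearMap.range (Matrix.mulVecLin M) = ⊤ := by
    apply Submodule.eq_top_of_finrank_eq
    rw [← Matrix.rank, hr, Module.finrank_fintype_fun_eq_card]
  intro t
  have : t ∈ LinearMap.range (Matrix.mulVecLin M) := htop ▸ Submodule.mem_top
  obtain ⟨v, hv⟩ := this
  exact ⟨v, hv⟩

/-- Cayley–Hamilton in powers form. -/
lemma fl_CH (n : ℕ) (A : Matrix (Fin n) (Fin n) ℝ) :
    A ^ n = ∑ k ∈ Finset.range n, (-(A.charpoly.coeff k)) • A ^ k := by
  have h0 := A.aeval_self_charpoly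
  have hdeg : A.charpoly.natDegree = n := by simp [A.charpoly_natDegree_eq_dim]
  rw [Polynomial.aeval_eq_sum_range, hdeg, Finset.sum_range_succ] at h0
  have hmon : A.charpoly.coeff n = 1 := by
    have := A.charpoly_monic.coeff_natDegree
    rwa [hdeg] at this
  rw [hmon, one_smul] at h0
  have h1 : A ^ n = -(∑ k ∈ Finset.range n, A.charpoly.coeff k • A ^ k) :=
    eq_neg_of_add_eq_zero_right h0
  rw [h1, ← Finset.sum_neg_distrib]
  exact Finset.sum_congr rfl fun k _ => (neg_smul _ _).symm

lemma fl_sum_dotProduct {ι γ : Type*} [Fintype γ] (s : Finset ι) (f : ι → γ → ℝ) (v : γ → ℝ) :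
    (∑ i ∈ s, f i) ⬝ᵥ v = ∑ i ∈ s, f i ⬝ᵥ v := by
  simp only [dotProduct, Finset.sum_apply, Finset.sum_mul]
  exact Finset.sum_comm

/-- Fundamental lemma: for a controllable and observable LTI system, if the input data is
persistently exciting of order `2N + n`, then every length-`2N` input/output trajectory of
the system is a linear combination of the columns of the stacked data Hankel matrices
`U_p, Y_p, U_f, Y_f`. -/
theorem fundamental_lemma
    {n m p : ℕ} (N H : ℕ)
    (A : Matrix (Fin n) (Fin n) ℝ) (B : Matrix (Fin n) (Fin m) ℝ)
    (C : Matrix (Fin p) (Fin n) ℝ)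
    -- controllability and observability
    (ctrb : Matrix (Fin n) (Fin n × Fin m) ℝ)
    (hctrb : ∀ c : Fin n, ∀ i : Fin n, ∀ b : Fin m, ctrb c (i, b) = (A ^ (i : ℕ) * B) c b)
    (obsv : Matrix (Fin n × Fin p) (Fin n) ℝ)
    (hobsv : ∀ i : Fin n, ∀ a : Fin p, ∀ c : Fin n, obsv (i, a) c = (C * A ^ (i : ℕ)) a c)
    (hcontrollable : ctrb.rank = n)
    (hobservable : obsv.rank = n)
    -- the data-generating trajectory
    (u : ℕ → Fin m → ℝ) (x : ℕ → Fin n → ℝ) (y : ℕ → Fin p → ℝ)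
    (hstate : ∀ k, x (k + 1) = A.mulVec (x k) + B.mulVec (u k))
    (hout : ∀ k, y k = C.mulVec (x k))
    -- persistency of excitation of order 2N + n
    (PE : Matrix (Fin (2 * N + n) × Fin m) (Fin (H - n)) ℝ)
    (hPE : ∀ i : Fin (2 * N + n), ∀ b : Fin m, ∀ j : Fin (H - n),
      PE (i, b) j = u ((i : ℕ) + (j : ℕ)) b)
    (hPErank : PE.rank = m * (2 * N + n))
    -- the data Hankel matrices
    (Up : Matrix (Fin N × Fin m) (Fin H) ℝ)
    (hUp : ∀ i : Fin N, ∀ b : Fin m, ∀ j : Fin H, Up (i, b) j = u ((i : ℕ) + (j : ℕ)) b)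
    (Yp : Matrix (Fin N × Fin p) (Fin H) ℝ)
    (hYp : ∀ i : Fin N, ∀ a : Fin p, ∀ j : Fin H, Yp (i, a) j = y (1 + (i : ℕ) + (j : ℕ)) a)
    (Uf : Matrix (Fin N × Fin m) (Fin H) ℝ)
    (hUf : ∀ i : Fin N, ∀ b : Fin m, ∀ j : Fin H, Uf (i, b) j = u (N + (i : ℕ) + (j : ℕ)) b)
    (Yf : Matrix (Fin N × Fin p) (Fin H) ℝ)
    (hYf : ∀ i : Fin N, ∀ a : Fin p, ∀ j : Fin H,
      Yf (i, a) j = y (N + 1 + (i : ℕ) + (j : ℕ)) a) :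
    -- every trajectory of the same system is in the column span of the data
    ∀ (ub : ℕ → Fin m → ℝ) (xb : ℕ → Fin n → ℝ) (yb : ℕ → Fin p → ℝ),
      (∀ k, xb (k + 1) = A.mulVec (xb k) + B.mulVec (ub k)) →
      (∀ k, yb k = C.mulVec (xb k)) →
      ∃ v : Fin H → ℝ,
        Up.mulVec v = (fun ib : Fin N × Fin m => ub (ib.1 : ℕ) ib.2) ∧
        Yp.mulVec v = (fun ia : Fin N × Fin p => yb (1 + (ia.1 : ℕ)) ia.2) ∧
        Uf.mulVec v = (fun ib : Fin N × Fin m => ub (N + (ib.1 : ℕ)) ib.2) ∧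
        Yf.mulVec v = (fun ia : Fin N × Fin p => yb (N + 1 + (ia.1 : ℕ)) ia.2) := by
  intro ub xb yb hstateb houtb
  classical
  -- the stacked data matrix [inputs Hankel of depth 2N ; states]
  set M : Matrix ((Fin (2 * N) × Fin m) ⊕ Fin n) (Fin H) ℝ :=
    fun r j => Sum.elim (fun q : Fin (2 * N) × Fin m => u ((q.1 : ℕ) + (j : ℕ)) q.2)
      (fun e => x (j : ℕ) e) r with hM
  have hsurj : Function.Surjective M.mulVec := by
    apply fl_surj_of_leftker
    intro w hw
    set ξ : Fin n → ℝ := fun e => w (Sum.inr e) with hξ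
    set η : ℕ → Fin m → ℝ :=
      fun i b => if h : i < 2 * N then w (Sum.inl (⟨i, h⟩, b)) else 0 with hη
    -- base relation from `w ᵥ* M = 0`
    have hw' : ∀ j, j < H →
        ξ ⬝ᵥ x j + ∑ i ∈ Finset.range (2 * N), η i ⬝ᵥ u (i + j) = 0 := by
      intro j hj
      have h0 := congrFun hw ⟨j, hj⟩
      simp only [Matrix.vecMul, dotProduct, Pi.zero_apply, Fintype.sum_sum_type,
        Fintype.sum_prod_type, hM, Sum.elim_inl, Sum.elim_inr] at h0
      rw [← Fin.sum_univ_eq_sum_range (fun i => η i ⬝ᵥ u (i + j)) (2 * N)]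
      have hterm : ∀ i : Fin (2 * N),
          η (i : ℕ) ⬝ᵥ u ((i : ℕ) + j) = ∑ b, w (Sum.inl (i, b)) * u ((i : ℕ) + j) b := by
        intro i
        refine Finset.sum_congr rfl fun b _ => ?_
        simp [hη, i.isLt]
      simp only [hterm]
      have hxi : ξ ⬝ᵥ x j = ∑ e, w (Sum.inr e) * x j e := by
        refine Finset.sum_congr rfl fun e _ => by simp [hξ]
      rw [hxi, add_comm]
      exact h0
    -- the shifted annihilating coefficients
    set g : ℕ → ℕ → Fin m → ℝ :=
      fun k i b => if i < k then (ξ ᵥ* (A ^ (k - 1 - i) * B)) b else η (i - k) b with hg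
    have hgz : ∀ k i, 2 * N + k ≤ i → g k i = 0 := by
      intro k i hi
      funext b
      simp [hg, show ¬ i < k by omega, hη, show ¬ i - k < 2 * N by omega]
    have key : ∀ k j, j + k < H →
        (ξ ᵥ* (A ^ k)) ⬝ᵥ x j
          + ∑ i ∈ Finset.range (2 * N + k), g k i ⬝ᵥ u (i + j) = 0 := by
      intro k
      induction k with
      | zero =>
        intro j hj
        have h1 := hw' j (by omega)
        have hg0 : ∀ i, g 0 i = η i := by
          intro i; funext b; simp [hg]
        simpa [pow_zero, Matrix.vecMul_one, hg0] using h1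
      | succ k ih =>
        intro j hj
        have h1 := ih (j + 1) (by omega)
        have e1 : (ξ ᵥ* (A ^ (k + 1))) ⬝ᵥ x j + (ξ ᵥ* (A ^ k * B)) ⬝ᵥ u j
            = (ξ ᵥ* (A ^ k)) ⬝ᵥ x (j + 1) := by
          rw [hstate j, dotProduct_add, Matrix.dotProduct_mulVec,
            Matrix.dotProduct_mulVec, Matrix.vecMul_vecMul, Matrix.vecMul_vecMul, ← pow_succ]
        have hgs : ∀ i, g (k + 1) (i + 1) = g k i := by
          intro i; funext b
          by_cases hik : i < k
          · simp [hg, hik, Nat.succ_lt_succ_iff, show k + 1 - 1 - (i + 1) = k - 1 - i by omega,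
              show k - (i + 1) = k - 1 - i by omega]
          · simp [hg, hik, Nat.succ_lt_succ_iff, show i + 1 - (k + 1) = i - k by omega]
        have e2 : ∑ i ∈ Finset.range (2 * N + (k + 1)), g (k + 1) i ⬝ᵥ u (i + j)
            = ∑ i ∈ Finset.range (2 * N + k), g k i ⬝ᵥ u (i + (j + 1))
              + (ξ ᵥ* (A ^ k * B)) ⬝ᵥ u j := by
          rw [show 2 * N + (k + 1) = (2 * N + k) + 1 from rfl, Finset.sum_range_succ']
          congr 1
          · refine Finset.sum_congr rfl fun i _ => ?_
            rw [hgs i, show i + 1 + j = i + (j + 1) by omega]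
          · rw [show (0 : ℕ) + j = j from by omega]
            refine Finset.sum_congr rfl fun b _ => ?_
            simp [hg]
        rw [e2]
        linarith [e1, h1]
    -- Cayley–Hamilton combination
    set c : ℕ → ℝ := fun k => -(A.charpoly.coeff k) with hc
    have hCH : A ^ n = ∑ k ∈ Finset.range n, c k • A ^ k := fl_CH n A
    have hSn : ∀ j, (ξ ᵥ* (A ^ n)) ⬝ᵥ x j
        = ∑ k ∈ Finset.range n, c k * ((ξ ᵥ* (A ^ k)) ⬝ᵥ x j) := by
      intro j
      have hvm : ξ ᵥ* (A ^ n) = ∑ k ∈ Finset.range n, c k • (ξ ᵥ* A ^ k) := by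
        rw [hCH]
        funext d
        simp only [Matrix.vecMul, dotProduct, Matrix.sum_apply, Matrix.smul_apply,
          smul_eq_mul, Finset.mul_sum, Finset.sum_apply, Pi.smul_apply]
        rw [Finset.sum_comm]
        exact Finset.sum_congr rfl fun k _ => Finset.sum_congr rfl fun e _ => by ring
      rw [hvm, fl_sum_dotProduct]
      exact Finset.sum_congr rfl fun k _ => by rw [smul_dotProduct, smul_eq_mul]
    have hkey_ext : ∀ k j, k < n → j + n < H →
        ∑ i ∈ Finset.range (2 * N + n), g k i ⬝ᵥ u (i + j)
          = -((ξ ᵥ* (A ^ k)) ⬝ᵥ x j) := by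
      intro k j hk hj
      have h1 := key k j (by omega)
      have h2 : ∑ i ∈ Finset.range (2 * N + n), g k i ⬝ᵥ u (i + j)
          = ∑ i ∈ Finset.range (2 * N + k), g k i ⬝ᵥ u (i + j) := by
        symm
        apply Finset.sum_subset
        · exact Finset.range_subset_range.mpr (by omega)
        · intro i _ hi2
          rw [Finset.mem_range, not_lt] at hi2
          rw [hgz k i hi2]
          exact zero_dotProduct _
      rw [h2]
      linarith [h1]
    have hthsum : ∀ j, j + n < H →
        ∑ i ∈ Finset.range (2 * N + n),
          ((g n i - ∑ k ∈ Finset.range n, c k • g k i) ⬝ᵥ u (i + j)) = 0 := by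
      intro j hj
      have step1 : ∀ i, (g n i - ∑ k ∈ Finset.range n, c k • g k i) ⬝ᵥ u (i + j)
          = g n i ⬝ᵥ u (i + j) - ∑ k ∈ Finset.range n, c k * (g k i ⬝ᵥ u (i + j)) := by
        intro i
        rw [sub_dotProduct, fl_sum_dotProduct]
        congr 1
        exact Finset.sum_congr rfl fun k _ => by rw [smul_dotProduct, smul_eq_mul]
      simp only [step1]
      rw [Finset.sum_sub_distrib, Finset.sum_comm]
      have hGn : ∑ i ∈ Finset.range (2 * N + n), g n i ⬝ᵥ u (i + j)
          = -((ξ ᵥ* (A ^ n)) ⬝ᵥ x j) := by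
        have h1 := key n j hj
        linarith [h1]
      rw [hGn, hSn j]
      have : ∀ k ∈ Finset.range n,
          ∑ i ∈ Finset.range (2 * N + n), c k * (g k i ⬝ᵥ u (i + j))
            = c k * (-((ξ ᵥ* (A ^ k)) ⬝ᵥ x j)) := by
        intro k hk
        rw [Finset.mem_range] at hk
        rw [← Finset.mul_sum, hkey_ext k j hk hj]
      rw [Finset.sum_congr rfl this]
      simp [mul_neg, Finset.sum_neg_distrib]
    -- persistency of excitation kills the combined coefficient vector
    set θ : Fin (2 * N + n) × Fin m → ℝ :=
      fun r => (g n (r.1 : ℕ) - ∑ k ∈ Finset.range n, c k • g k (r.1 : ℕ)) r.2 with hθ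
    have hθPE : θ ᵥ* PE = 0 := by
      funext j
      have hjn : (j : ℕ) + n < H := by have := j.isLt; omega
      have h1 := hthsum (j : ℕ) hjn
      simp only [Matrix.vecMul, dotProduct, Pi.zero_apply, Fintype.sum_prod_type]
      rw [← Fin.sum_univ_eq_sum_range
        (fun i => (g n i - ∑ k ∈ Finset.range n, c k • g k i) ⬝ᵥ u (i + (j : ℕ)))
        (2 * N + n)] at h1
      rw [← h1]
      refine Finset.sum_congr rfl fun i _ => ?_
      simp only [dotProduct]
      refine Finset.sum_congr rfl fun b _ => ?_
      rw [hPE i b j]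
    have hθ0 : θ = 0 := by
      apply fl_leftker_of_rank PE _ θ hθPE
      simp [hPErank, mul_comm]
    have hθcomp : ∀ i, i < 2 * N + n → ∀ b,
        g n i b = ∑ k ∈ Finset.range n, c k * g k i b := by
      intro i hi b
      have h1 := congrFun hθ0 (⟨i, hi⟩, b)
      simp only [hθ, Pi.zero_apply, Pi.sub_apply, Finset.sum_apply, Pi.smul_apply,
        smul_eq_mul] at h1
      linarith [h1]
    -- the input part of the annihilator vanishes
    have hη0 : ∀ d i, 2 * N ≤ i + d → ∀ b, η i b = 0 := by
      intro d
      induction d with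
      | zero =>
        intro i hi b
        simp [hη, show ¬ i < 2 * N by omega]
      | succ d ih =>
        intro i hi b
        by_cases hcase : 2 * N ≤ i + d
        · exact ih i hcase b
        · have h1 := hθcomp (i + n) (by omega) b
          have h2 : g n (i + n) b = η i b := by
            simp [hg, show ¬ i + n < n by omega, show i + n - n = i by omega]
          have h3 : ∀ k ∈ Finset.range n, c k * g k (i + n) b = 0 := by
            intro k hk
            rw [Finset.mem_range] at hk
            have h4 : g k (i + n) b = η (i + n - k) b := by
              simp [hg, show ¬ i + n < k by omega]
            have h5 : η (i + n - k) b = 0 := ih (i + n - k) (by omega) b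
            rw [h4, h5, mul_zero]
          rw [h2, Finset.sum_eq_zero h3] at h1
          exact h1
    have hηall : ∀ i b, η i b = 0 := fun i b => hη0 (2 * N) i (by omega) b
    -- the state part of the annihilator vanishes, via controllability
    have hξB : ∀ d, d < n → ∀ b, (ξ ᵥ* (A ^ d * B)) b = 0 := by
      intro d
      induction d using Nat.strong_induction_on with
      | _ d ih =>
        intro hd b
        have h1 := hθcomp (n - 1 - d) (by omega) b
        have h2 : g n (n - 1 - d) b = (ξ ᵥ* (A ^ d * B)) b := by
          simp [hg, show n - 1 - d < n by omega, show n - 1 - (n - 1 - d) = d by omega]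
        have h3 : ∀ k ∈ Finset.range n, c k * g k (n - 1 - d) b = 0 := by
          intro k hk
          rw [Finset.mem_range] at hk
          by_cases hik : n - 1 - d < k
          · have h4 : g k (n - 1 - d) b = (ξ ᵥ* (A ^ (k - 1 - (n - 1 - d)) * B)) b := by
              simp [hg, hik]
            rw [h4, ih (k - 1 - (n - 1 - d)) (by omega) (by omega) b, mul_zero]
          · have h4 : g k (n - 1 - d) b = η (n - 1 - d - k) b := by
              simp [hg, hik]
            rw [h4, hηall, mul_zero]
        rw [h2, Finset.sum_eq_zero h3] at h1
        exact h1
    have hξ0 : ξ = 0 := by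
      apply fl_leftker_of_rank ctrb (by simp [hcontrollable]) ξ
      funext q
      obtain ⟨i, b⟩ := q
      have h1 : (ξ ᵥ* ctrb) (i, b) = (ξ ᵥ* (A ^ (i : ℕ) * B)) b := by
        simp only [Matrix.vecMul, dotProduct]
        refine Finset.sum_congr rfl fun e _ => ?_
        rw [hctrb e i b]
      rw [h1, hξB (i : ℕ) i.isLt b]
      rfl
    -- conclude the left kernel is trivial
    funext r
    cases r with
    | inl q =>
      obtain ⟨i, b⟩ := q
      have h1 := hηall (i : ℕ) b
      simpa [hη, i.isLt] using h1
    | inr e =>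
      have h1 := congrFun hξ0 e
      simpa [hξ] using h1
  -- solve for the combination v
  obtain ⟨v, hv⟩ := hsurj
    (Sum.elim (fun q : Fin (2 * N) × Fin m => ub (q.1 : ℕ) q.2) (fun e => xb 0 e))
  have hE1 : ∀ i, ∀ hi : i < 2 * N, ∀ b,
      ∑ j : Fin H, u (i + (j : ℕ)) b * v j = ub i b := by
    intro i hi b
    have h1 := congrFun hv (Sum.inl (⟨i, hi⟩, b))
    simpa [hM, Matrix.mulVec, dotProduct] using h1
  have hE2 : ∀ e, ∑ j : Fin H, x (j : ℕ) e * v j = xb 0 e := by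
    intro e
    have h1 := congrFun hv (Sum.inr e)
    simpa [hM, Matrix.mulVec, dotProduct] using h1
  -- the state combination follows the barred trajectory
  have hX : ∀ t, t ≤ 2 * N → ∀ e, ∑ j : Fin H, x (t + (j : ℕ)) e * v j = xb t e := by
    intro t
    induction t with
    | zero => intro _ e; simpa using hE2 e
    | succ t ih =>
      intro ht e
      have hA : ∑ j : Fin H, ∑ d, A e d * (x (t + (j : ℕ)) d * v j) = ∑ d, A e d * xb t d := by
        rw [Finset.sum_comm]
        refine Finset.sum_congr rfl fun d _ => ?_
        rw [← Finset.mul_sum, ih (by omega) d]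
      have hB : ∑ j : Fin H, ∑ b, B e b * (u (t + (j : ℕ)) b * v j) = ∑ b, B e b * ub t b := by
        rw [Finset.sum_comm]
        refine Finset.sum_congr rfl fun b _ => ?_
        rw [← Finset.mul_sum, hE1 t (by omega) b]
      calc ∑ j : Fin H, x (t + 1 + (j : ℕ)) e * v j
          = ∑ j : Fin H, (∑ d, A e d * (x (t + (j : ℕ)) d * v j)
              + ∑ b, B e b * (u (t + (j : ℕ)) b * v j)) := by
            refine Finset.sum_congr rfl fun j _ => ?_
            rw [show t + 1 + (j : ℕ) = (t + (j : ℕ)) + 1 by omega, hstate (t + (j : ℕ))]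
            simp [Matrix.mulVec, dotProduct, add_mul, Finset.sum_mul, mul_assoc]
        _ = ∑ d, A e d * xb t d + ∑ b, B e b * ub t b := by
            rw [Finset.sum_add_distrib, hA, hB]
        _ = xb (t + 1) e := by
            rw [hstateb t]
            simp [Matrix.mulVec, dotProduct]
  -- the output combination follows the barred trajectory
  have hY : ∀ t, t ≤ 2 * N → ∀ a, ∑ j : Fin H, y (t + (j : ℕ)) a * v j = yb t a := by
    intro t ht a
    calc ∑ j : Fin H, y (t + (j : ℕ)) a * v j
        = ∑ j : Fin H, ∑ e, C a e * (x (t + (j : ℕ)) e * v j) := by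
          refine Finset.sum_congr rfl fun j _ => ?_
          rw [hout (t + (j : ℕ))]
          simp [Matrix.mulVec, dotProduct, Finset.sum_mul, mul_assoc]
      _ = ∑ e, C a e * xb t e := by
          rw [Finset.sum_comm]
          refine Finset.sum_congr rfl fun e _ => ?_
          rw [← Finset.mul_sum, hX t ht e]
      _ = yb t a := by
          rw [houtb t]
          simp [Matrix.mulVec, dotProduct]
  refine ⟨v, ?_, ?_, ?_, ?_⟩
  · funext q
    obtain ⟨i, b⟩ := q
    have h1 := hE1 (i : ℕ) (by have := i.isLt; omega) b
    simp only [Matrix.mulVec, dotProduct]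
    simpa [hUp] using h1
  · funext q
    obtain ⟨i, a⟩ := q
    have h1 := hY (1 + (i : ℕ)) (by have := i.isLt; omega) a
    simp only [Matrix.mulVec, dotProduct]
    simpa [hYp] using h1
  · funext q
    obtain ⟨i, b⟩ := q
    have h1 := hE1 (N + (i : ℕ)) (by have := i.isLt; omega) b
    simp only [Matrix.mulVec, dotProduct]
    simpa [hUf] using h1
  · funext q
    obtain ⟨i, a⟩ := q
    have h1 := hY (N + 1 + (i : ℕ)) (by have := i.isLt; omega) a
    simp only [Matrix.mulVec, dotProduct]
    simpa [hYf] using h1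
end

section
/- (Correctness of the Ho-Kalman-Kung algorithm.) Suppose the system of order n is controllable (rank C_n = n) and observable (rank O_n = n), and let N ≥ n+1 and H ≥ n. Let the Markov-parameter block Hankel matrix H ∈ ℝ^{pN×mH}, whose (i,j)-th p×m block is C A^{i+j−2} B, be factorized as H = O C' with O ∈ ℝ^{pN×n} of full column rank n and C' ∈ ℝ^{n×mH} of full row rank n. Define C_s ∈ ℝ^{p×n} as the first p rows of O, B_s ∈ ℝ^{n×m} as the first m columns of C', and A_s = O⁻ O_shift ∈ ℝ^{n×n}, where O_shift is the submatrix of O consisting of its last p(N−1) rows and O⁻ is any left inverse of the submatrix of O consisting of its first p(N−1) rows. Then the identified realization reproduces all Markov parameters: C_s A_s^k B_s = C A^k B for every k ≥ 0. -/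
open Matrix

lemma HKK.isUnit_of_rank_eq {n : ℕ} (G : Matrix (Fin n) (Fin n) ℝ) (h : G.rank = n) :
    IsUnit G := by
  rw [← Matrix.mulVec_injective_iff_isUnit]
  have hr : LinearMap.range G.mulVecLin = ⊤ := by
    apply Submodule.eq_top_of_finrank_eq
    rw [← Matrix.rank, h, Module.finrank_pi]
    simp
  have hs : Function.Surjective G.mulVecLin := LinearMap.range_eq_top.mp hr
  exact (LinearMap.injective_iff_surjective (f := G.mulVecLin)).mpr hs

lemma HKK.exists_left_inverse {n : ℕ} {J : Type*} [Fintype J] [DecidableEq J]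
    (M : Matrix J (Fin n) ℝ) (h : M.rank = n) :
    ∃ L : Matrix (Fin n) J ℝ, L * M = 1 := by
  have hG : (Mᵀ * M).rank = n := by rw [Matrix.rank_transpose_mul_self]; exact h
  have hU : IsUnit (Mᵀ * M) := HKK.isUnit_of_rank_eq _ hG
  refine ⟨(Mᵀ * M)⁻¹ * Mᵀ, ?_⟩
  rw [Matrix.mul_assoc, Matrix.nonsing_inv_mul _ ((Matrix.isUnit_iff_isUnit_det _).mp hU)]

lemma HKK.exists_right_inverse {n : ℕ} {J : Type*} [Fintype J] [DecidableEq J]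
    (M : Matrix (Fin n) J ℝ) (h : M.rank = n) :
    ∃ R : Matrix J (Fin n) ℝ, M * R = 1 := by
  obtain ⟨L, hL⟩ := HKK.exists_left_inverse Mᵀ (by rw [Matrix.rank_transpose]; exact h)
  refine ⟨Lᵀ, ?_⟩
  have := congrArg Matrix.transpose hL
  simpa [Matrix.transpose_mul] using this

/-- Correctness of the Ho-Kalman-Kung algorithm: for a controllable and observable system
of order `n`, with `N ≥ n+1` and `H ≥ n` (and `H ≥ 1` so that the first block column is
well defined), any full-rank factorization `Hankel = O * C'` of the Markov-parameter
block Hankel matrix yields, via `C_s` = first `p` rows of `O`, `B_s` = first `m` columns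
of `C'`, and `A_s = O⁻ O_shift` (with `O⁻` any left inverse of the first `p(N−1)` rows of
`O` and `O_shift` its last `p(N−1)` rows), a realization reproducing all Markov
parameters: `C_s A_s^k B_s = C A^k B` for every `k`. -/
theorem ho_kalman_kung_correct
    {n m p : ℕ} (N H : ℕ) (hN : n + 1 ≤ N) (hH : n ≤ H) (hH0 : 0 < H)
    (A : Matrix (Fin n) (Fin n) ℝ) (B : Matrix (Fin n) (Fin m) ℝ)
    (C : Matrix (Fin p) (Fin n) ℝ)
    -- controllability and observability of the true system
    (ctrb : Matrix (Fin n) (Fin n × Fin m) ℝ)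
    (hctrb : ∀ c : Fin n, ∀ i : Fin n, ∀ b : Fin m, ctrb c (i, b) = (A ^ (i : ℕ) * B) c b)
    (obsv : Matrix (Fin n × Fin p) (Fin n) ℝ)
    (hobsv : ∀ i : Fin n, ∀ a : Fin p, ∀ c : Fin n, obsv (i, a) c = (C * A ^ (i : ℕ)) a c)
    (hcontrollable : ctrb.rank = n)
    (hobservable : obsv.rank = n)
    -- the Markov-parameter Hankel matrix and its full-rank factorization
    (Hankel : Matrix (Fin N × Fin p) (Fin H × Fin m) ℝ)
    (hHankel : ∀ i : Fin N, ∀ a : Fin p, ∀ j : Fin H, ∀ b : Fin m,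
      Hankel (i, a) (j, b) = (C * A ^ ((i : ℕ) + (j : ℕ)) * B) a b)
    (O : Matrix (Fin N × Fin p) (Fin n) ℝ) (C' : Matrix (Fin n) (Fin H × Fin m) ℝ)
    (hfact : Hankel = O * C') (hOrank : O.rank = n) (hC'rank : C'.rank = n)
    -- the identified realization
    (Cs : Matrix (Fin p) (Fin n) ℝ)
    (hCs : ∀ a : Fin p, ∀ c : Fin n, Cs a c = O (⟨0, by omega⟩, a) c)
    (Bs : Matrix (Fin n) (Fin m) ℝ)
    (hBs : ∀ c : Fin n, ∀ b : Fin m, Bs c b = C' c (⟨0, hH0⟩, b))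
    (Ofirst : Matrix (Fin (N - 1) × Fin p) (Fin n) ℝ)
    (hOfirst : ∀ i : Fin (N - 1), ∀ a : Fin p, ∀ c : Fin n,
      Ofirst (i, a) c = O (⟨(i : ℕ), by omega⟩, a) c)
    (Oshift : Matrix (Fin (N - 1) × Fin p) (Fin n) ℝ)
    (hOshift : ∀ i : Fin (N - 1), ∀ a : Fin p, ∀ c : Fin n,
      Oshift (i, a) c = O (⟨(i : ℕ) + 1, by omega⟩, a) c) :
    ∀ Ominus : Matrix (Fin n) (Fin (N - 1) × Fin p) ℝ,
      Ominus * Ofirst = 1 →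
      ∀ k : ℕ, Cs * (Ominus * Oshift) ^ k * Bs = C * A ^ k * B := by
  intro Ominus hOminus k
  -- the true (extended) observability and controllability matrices, opaque with entry specs
  obtain ⟨Ob, hObdef⟩ : ∃ M : Matrix (Fin N × Fin p) (Fin n) ℝ,
      ∀ (i : Fin N) (a : Fin p) (c : Fin n), M (i, a) c = (C * A ^ (i : ℕ)) a c :=
    ⟨Matrix.of (fun ia c => (C * A ^ ((ia.1 : ℕ))) ia.2 c), fun _ _ _ => rfl⟩
  obtain ⟨Cb, hCbdef⟩ : ∃ M : Matrix (Fin n) (Fin H × Fin m) ℝ,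
      ∀ (c : Fin n) (j : Fin H) (b : Fin m), M c (j, b) = (A ^ (j : ℕ) * B) c b :=
    ⟨Matrix.of (fun c jb => (A ^ ((jb.1 : ℕ)) * B) c jb.2), fun _ _ _ => rfl⟩
  obtain ⟨Obf, hObfdef⟩ : ∃ M : Matrix (Fin (N - 1) × Fin p) (Fin n) ℝ,
      ∀ (i : Fin (N - 1)) (a : Fin p) (c : Fin n), M (i, a) c = (C * A ^ (i : ℕ)) a c :=
    ⟨Matrix.of (fun ia c => (C * A ^ ((ia.1 : ℕ))) ia.2 c), fun _ _ _ => rfl⟩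
  -- Hankel = Ob * Cb
  have hOC : Ob * Cb = O * C' := by
    rw [← hfact]
    ext ⟨i, a⟩ ⟨j, b⟩
    rw [Matrix.mul_apply, hHankel]
    have key : (C * A ^ ((i : ℕ) + (j : ℕ)) * B) a b
        = ((C * A ^ (i : ℕ)) * (A ^ (j : ℕ) * B)) a b := by
      rw [pow_add]
      simp [Matrix.mul_assoc]
    rw [key, Matrix.mul_apply]
    exact Finset.sum_congr rfl fun d _ => by rw [hObdef, hCbdef]
  -- left inverse of Ob via obsv
  obtain ⟨Lo, hLo⟩ := HKK.exists_left_inverse obsv hobservable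
  obtain ⟨P, hPdef⟩ : ∃ P : Matrix (Fin n × Fin p) (Fin N × Fin p) ℝ,
      ∀ (x : Fin n × Fin p) (y : Fin N × Fin p),
        P x y = if y = ((⟨(x.1 : ℕ), by omega⟩ : Fin N), x.2) then 1 else 0 :=
    ⟨Matrix.of (fun x y => if y = ((⟨(x.1 : ℕ), by omega⟩ : Fin N), x.2) then 1 else 0),
      fun _ _ => rfl⟩
  have hPOb : P * Ob = obsv := by
    ext ⟨i, a⟩ c
    rw [Matrix.mul_apply, hobsv]
    rw [Finset.sum_eq_single ((⟨(i : ℕ), by omega⟩ : Fin N), a)]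
    · rw [hPdef, hObdef]
      simp
    · intro y _ hy
      rw [hPdef]
      simp [hy]
    · intro h; exact absurd (Finset.mem_univ _) h
  have hLOb : (Lo * P) * Ob = 1 := by rw [Matrix.mul_assoc, hPOb, hLo]
  -- right inverse of Cb via ctrb
  obtain ⟨Rc, hRc⟩ := HKK.exists_right_inverse ctrb hcontrollable
  obtain ⟨Q, hQdef⟩ : ∃ Q : Matrix (Fin H × Fin m) (Fin n × Fin m) ℝ,
      ∀ (y : Fin H × Fin m) (x : Fin n × Fin m),
        Q y x = if y = ((⟨(x.1 : ℕ), by omega⟩ : Fin H), x.2) then 1 else 0 :=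
    ⟨Matrix.of (fun y x => if y = ((⟨(x.1 : ℕ), by omega⟩ : Fin H), x.2) then 1 else 0),
      fun _ _ => rfl⟩
  have hCbQ : Cb * Q = ctrb := by
    ext c ⟨i, b⟩
    rw [Matrix.mul_apply, hctrb]
    rw [Finset.sum_eq_single ((⟨(i : ℕ), by omega⟩ : Fin H), b)]
    · rw [hQdef, hCbdef]
      simp
    · intro y _ hy
      rw [hQdef]
      simp [hy]
    · intro h; exact absurd (Finset.mem_univ _) h
  have hRCb : Cb * (Q * Rc) = 1 := by rw [← Matrix.mul_assoc, hCbQ, hRc]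
  -- one-sided inverses of O and C'
  obtain ⟨LO, hLO⟩ := HKK.exists_left_inverse O hOrank
  obtain ⟨RC', hRC'⟩ := HKK.exists_right_inverse C' hC'rank
  -- the similarity transform
  obtain ⟨T, hTdef⟩ : ∃ T : Matrix (Fin n) (Fin n) ℝ, T = Cb * RC' := ⟨_, rfl⟩
  obtain ⟨S, hSdef⟩ : ∃ S : Matrix (Fin n) (Fin n) ℝ, S = LO * Ob := ⟨_, rfl⟩
  have hOT : Ob * T = O := by
    rw [hTdef, ← Matrix.mul_assoc, hOC, Matrix.mul_assoc, hRC', Matrix.mul_one]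
  have hSC : S * Cb = C' := by
    rw [hSdef, Matrix.mul_assoc, hOC, ← Matrix.mul_assoc, hLO, Matrix.one_mul]
  have hST : S * T = 1 := by
    rw [hTdef, ← Matrix.mul_assoc, hSC, hRC']
  have hOS : O * S = Ob := by
    calc O * S = (O * S) * (Cb * (Q * Rc)) := by rw [hRCb, Matrix.mul_one]
      _ = (O * (S * Cb)) * (Q * Rc) := by simp [Matrix.mul_assoc]
      _ = (Ob * Cb) * (Q * Rc) := by rw [hSC, hOC]
      _ = Ob * (Cb * (Q * Rc)) := by rw [Matrix.mul_assoc]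
      _ = Ob := by rw [hRCb, Matrix.mul_one]
  have hTS : T * S = 1 := by
    calc T * S = ((Lo * P) * Ob) * (T * S) := by rw [hLOb, Matrix.one_mul]
      _ = (Lo * P) * ((Ob * T) * S) := by simp [Matrix.mul_assoc]
      _ = (Lo * P) * (O * S) := by rw [hOT]
      _ = (Lo * P) * Ob := by rw [hOS]
      _ = 1 := hLOb
  -- identified matrices in terms of the true ones
  have hCsT : Cs = C * T := by
    ext a c
    rw [hCs a c]
    have e0 : O (⟨0, by omega⟩, a) c = (Ob * T) (⟨0, by omega⟩, a) c := by rw [hOT]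
    rw [e0, Matrix.mul_apply, Matrix.mul_apply]
    refine Finset.sum_congr rfl fun d _ => ?_
    rw [hObdef]
    simp
  have hBsS : Bs = S * B := by
    ext c b
    rw [hBs c b, ← hSC, Matrix.mul_apply, Matrix.mul_apply]
    refine Finset.sum_congr rfl fun d _ => ?_
    rw [hCbdef]
    simp
  have hOfEq : Ofirst = Obf * T := by
    ext ⟨i, a⟩ c
    rw [hOfirst]
    have e0 : O (⟨(i : ℕ), by omega⟩, a) c = (Ob * T) (⟨(i : ℕ), by omega⟩, a) c := by
      rw [hOT]
    rw [e0, Matrix.mul_apply, Matrix.mul_apply]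
    exact Finset.sum_congr rfl fun d _ => by rw [hObdef, hObfdef]
  have hpowkey : ∀ i : ℕ, (C * A ^ i) * (A * T) = (C * A ^ (i + 1)) * T := by
    intro i
    rw [pow_succ]
    simp [Matrix.mul_assoc]
  have hOshEq : Oshift = Obf * (A * T) := by
    ext ⟨i, a⟩ c
    rw [hOshift]
    have e0 : O (⟨(i : ℕ) + 1, by omega⟩, a) c = (Ob * T) (⟨(i : ℕ) + 1, by omega⟩, a) c := by
      rw [hOT]
    have h1 : (Ob * T) ((⟨(i : ℕ) + 1, by omega⟩ : Fin N), a) c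
        = ((C * A ^ ((i : ℕ) + 1)) * T) a c := by
      rw [Matrix.mul_apply, Matrix.mul_apply]
      exact Finset.sum_congr rfl fun d _ => by rw [hObdef]
    have h2 : (Obf * (A * T)) (i, a) c = ((C * A ^ (i : ℕ)) * (A * T)) a c := by
      rw [Matrix.mul_apply, Matrix.mul_apply]
      exact Finset.sum_congr rfl fun d _ => by rw [hObfdef]
    rw [e0, h1, h2, hpowkey]
  have hMS : Ominus * Obf = S := by
    have h1 : (Ominus * Obf) * T = 1 := by rw [Matrix.mul_assoc, ← hOfEq, hOminus]
    calc Ominus * Obf = (Ominus * Obf) * (T * S) := by rw [hTS, Matrix.mul_one]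
      _ = ((Ominus * Obf) * T) * S := by simp [Matrix.mul_assoc]
      _ = S := by rw [h1, Matrix.one_mul]
  have hAs : Ominus * Oshift = S * A * T := by
    rw [hOshEq, ← Matrix.mul_assoc, hMS, Matrix.mul_assoc]
  have hpow : ∀ k : ℕ, (S * A * T) ^ k = S * A ^ k * T := by
    intro k
    induction k with
    | zero => rw [pow_zero, pow_zero, Matrix.mul_one, hST]
    | succ k ih =>
      rw [pow_succ, ih, pow_succ]
      calc S * A ^ k * T * (S * A * T) = S * A ^ k * (T * S) * (A * T) := by
            simp [Matrix.mul_assoc]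
        _ = S * A ^ k * (A * T) := by rw [hTS, Matrix.mul_one]
        _ = S * (A ^ k * A) * T := by simp [Matrix.mul_assoc]
  rw [hCsT, hBsS, hAs, hpow k]
  calc C * T * (S * A ^ k * T) * (S * B) = C * (T * S) * A ^ k * ((T * S) * B) := by
        simp [Matrix.mul_assoc]
    _ = C * A ^ k * B := by rw [hTS]; simp [Matrix.mul_assoc]
end
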